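/- Let k = 2m be an even integer with m ≥ 1, and let X, Y, Z, W be rational numbers with X^k + Y^k = Z^k + W^k and ZW ≠ 0. Define a = (X^k − W^k)/(Z^m W^m), b = −(W/Z)^m, c = (Y^k − W^k)/(Z^m W^m), d = (Z/W)^m. Then ab + 1 = (Y/Z)^k, ac + 1 = (XY/(ZW))^k, ad + 1 = (X/W)^k, bc + 1 = (X/Z)^k, bd + 1 = 0, and cd + 1 = (Y/W)^k. -/

import Mathlib

theorem fermat_euler_even_identities
    (m : ℕ) (hm : 1 ≤ m) (k : ℕ) (hk : k = 2 * m)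
    (X Y Z W : ℚ) (hE : X ^ k + Y ^ k = Z ^ k + W ^ k) (hZW : Z * W ≠ 0)
    (a b c d : ℚ)
    (ha : a = (X ^ k - W ^ k) / (Z ^ m * W ^ m))
    (hb : b = -(W / Z) ^ m)
    (hc : c = (Y ^ k - W ^ k) / (Z ^ m * W ^ m))
    (hd : d = (Z / W) ^ m) :
    a * b + 1 = (Y / Z) ^ k ∧
    a * c + 1 = (X * Y / (Z * W)) ^ k ∧
    a * d + 1 = (X / W) ^ k ∧
    b * c + 1 = (X / Z) ^ k ∧
    b * d + 1 = 0 ∧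
    c * d + 1 = (Y / W) ^ k := by
  have hZ : Z ≠ 0 := fun h => hZW (by simp [h])
  have hW : W ≠ 0 := fun h => hZW (by simp [h])
  have hZm : Z ^ m ≠ 0 := pow_ne_zero _ hZ
  have hWm : W ^ m ≠ 0 := pow_ne_zero _ hW
  subst ha hb hc hd hk
  simp only [show 2 * m = m * 2 from mul_comm 2 m, pow_mul, div_pow, mul_pow] at *
  clear hZW hZ hW hm
  generalize X ^ m = x at *
  generalize Y ^ m = y at *
  generalize hz : Z ^ m = z at *
  generalize hw : W ^ m = w at *
  refine ⟨?_, ?_, ?_, ?_, ?_, ?_⟩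
  · field_simp; linear_combination -hE
  · field_simp; linear_combination (-w ^ 2) * hE
  · field_simp; ring
  · field_simp; linear_combination -hE
  · field_simp; ring
  · field_simp; ring
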